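/- Let a : ℝ → ℝ be continuous, strictly convex, and monotone increasing, and let F(v) = ∫₀ᵛ a(ξ) dξ. Then for all real numbers v_i ≠ v_j, one has (F(v_j) − F(v_i))·(a(v_j) − a(v_i)) < (a(v_j) + a(v_i))·(v_j − v_i)·(a(v_j) − a(v_i)) / 2. -/

import Mathlib

lemma key_trap (a : ℝ → ℝ) (ha : Continuous a)
    (hconv : StrictConvexOn ℝ Set.univ a) {p q : ℝ} (hpq : p < q) :
    (∫ x in p..q, a x) < (a p + a q) * (q - p) / 2 := by
  set L : ℝ → ℝ := fun x => a p + (a q - a p) / (q - p) * (x - p) with hL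
  have hq : q - p ≠ 0 := by linarith
  have hle : ∀ x ∈ Set.Ioc p q, a x ≤ L x := by
    intro x hx
    set t : ℝ := (x - p) / (q - p) with ht
    have ht0 : 0 ≤ t := by
      apply div_nonneg <;> [linarith [hx.1]; linarith]
    have ht1 : t ≤ 1 := by
      rw [div_le_one (by linarith)]; linarith [hx.2]
    have hx' : (1 - t) • p + t • q = x := by
      field_simp [ht]
      have h3 : t * (q - p) = x - p := by rw [ht]; exact div_mul_cancel₀ (x - p) hq
      linear_combination h3
    have := hconv.convexOn.2 (Set.mem_univ p) (Set.mem_univ q)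
      (by linarith : (0:ℝ) ≤ 1 - t) ht0 (by ring)
    rw [hx'] at this
    have hLx : L x = (1 - t) • a p + t • a q := by
      simp only [hL, smul_eq_mul, ht]; field_simp; ring
    rw [hLx]; exact this
  have hlt : a ((p + q) / 2) < L ((p + q) / 2) := by
    have := hconv.2 (Set.mem_univ p) (Set.mem_univ q) (ne_of_lt hpq)
      (by norm_num : (0:ℝ) < 1/2) (by norm_num : (0:ℝ) < 1/2) (by norm_num)
    have h1 : (1/2 : ℝ) • p + (1/2 : ℝ) • q = (p + q)/2 := by simp only [smul_eq_mul]; ring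
    rw [h1] at this
    have h2 : L ((p + q)/2) = (1/2 : ℝ) • a p + (1/2 : ℝ) • a q := by
      simp only [hL, smul_eq_mul]; field_simp; ring
    rw [h2]; exact this
  have hLc : Continuous L := by continuity
  have hint := intervalIntegral.integral_lt_integral_of_continuousOn_of_le_of_exists_lt
    hpq ha.continuousOn hLc.continuousOn hle
    ⟨(p + q)/2, ⟨by linarith, by linarith⟩, hlt⟩
  have hLval : (∫ x in p..q, L x) = (a p + a q) * (q - p) / 2 := by
    have : (∫ x in p..q, L x)
        = (∫ x in p..q, a p) + (∫ x in p..q, (a q - a p) / (q - p) * (x - p)) := by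
      apply intervalIntegral.integral_add
      · exact intervalIntegrable_const
      · exact ((continuous_const.mul ((continuous_id.sub continuous_const))).intervalIntegrable _ _)
    rw [this, intervalIntegral.integral_const,
      intervalIntegral.integral_const_mul]
    have : (∫ x in p..q, (x - p)) = (∫ x in p..q, x) - (∫ x in p..q, p) := by
      apply intervalIntegral.integral_sub
      · exact (continuous_id.intervalIntegrable _ _)
      · exact intervalIntegrable_const
    rw [this, integral_id, intervalIntegral.integral_const]
    field_simp
    ring
  rw [hLval] at hint
  exact hint

theorem stmt0 (a : ℝ → ℝ) (ha : Continuous a)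
    (hconv : StrictConvexOn ℝ Set.univ a) (hmono : StrictMono a)
    (F : ℝ → ℝ) (hF : ∀ v : ℝ, F v = ∫ ξ in (0:ℝ)..v, a ξ) :
    ∀ vi vj : ℝ, vi ≠ vj →
      (F vj - F vi) * (a vj - a vi) <
        (a vj + a vi) * (vj - vi) * (a vj - a vi) / 2 := by
  intro vi vj hne
  have hFdiff : ∀ p q : ℝ, F q - F p = ∫ x in p..q, a x := by
    intro p q
    rw [hF p, hF q, ← intervalIntegral.integral_interval_sub_left
      (ha.intervalIntegrable 0 q) (ha.intervalIntegrable 0 p)]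
  rcases lt_or_gt_of_ne hne with h | h
  · have hkey := key_trap a ha hconv h
    have hma : a vi < a vj := hmono h
    have hFd := hFdiff vi vj
    nlinarith [mul_lt_mul_of_pos_right hkey (by linarith : (0:ℝ) < a vj - a vi)]
  · have hkey := key_trap a ha hconv h
    have hma : a vj < a vi := hmono h
    have hFd := hFdiff vj vi
    have : F vj - F vi = -(∫ x in vj..vi, a x) := by
      rw [← hFd]; ring
    nlinarith [mul_lt_mul_of_pos_right hkey (by linarith : (0:ℝ) < a vi - a vj)]
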